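/- Let f^{[α]}, g1^{[β1]}, g2^{[β2]} ∈ I^{[Σ]} with f, g1, g2 ≠ 0 and suppose there exist t1, t2 ∈ T(A), b1, b2 ∈ ⟨Y⟩ with LT(f) = LT(t1 g1 b1) + LT(t2 g2 b2) and sig(t1 β1 b1) ≻ sig(t2 β2 b2). Then there exist an ambiguity a ∈ amb(g1^{[β1]}, g2^{[β2]}), a G-polynomial g3^{[β3]} = G-Pol(a) (with Bézout coefficients chosen so that sig(G-Pol(a)) ≃ SIG(a)), t3 ∈ T(A) and b3 ∈ ⟨Y⟩ such that LT(t3 g3 b3) = LT(f) and sig(t3 β3 b3) ≃ sig(t1 β1 b1). -/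

import Mathlib

/-!  Signature Gröbner bases in the mixed algebra `R[x₁,…,x_k]⟨y₁,…,y_n⟩`
over a principal ideal domain `R`, following Hofstadler–Verron. -/

open Finsupp

/-- A mixed monomial `v·w`, with `v` a commutative monomial in `x₁,…,x_k`
(recorded by its exponent vector) and `w` a word in the noncommutative
variables `y₁,…,y_n`. -/
@[ext]
structure MMon (k n : ℕ) where
  c : Fin k →₀ ℕ
  w : FreeMonoid (Fin n)

namespace MMon

instance (k n : ℕ) : One (MMon k n) := ⟨⟨0, 1⟩⟩
noncomputable instance (k n : ℕ) : Mul (MMon k n) := ⟨fun a b => ⟨a.c + b.c, a.w * b.w⟩⟩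

@[simp] lemma mul_c {k n : ℕ} (a b : MMon k n) : (a * b).c = a.c + b.c := rfl
@[simp] lemma mul_w {k n : ℕ} (a b : MMon k n) : (a * b).w = a.w * b.w := rfl
@[simp] lemma one_c {k n : ℕ} : (1 : MMon k n).c = 0 := rfl
@[simp] lemma one_w {k n : ℕ} : (1 : MMon k n).w = 1 := rfl

noncomputable instance (k n : ℕ) : Monoid (MMon k n) where
  mul_assoc a b c := by ext : 1 <;> simp [add_assoc, mul_assoc]
  one_mul a := by ext : 1 <;> simp
  mul_one a := by ext : 1 <;> simp

end MMon

/-- A module monomial `u·a·ε_i·b` of the free bimodule `Σ = (A ⊗_{R[X]} A)^r`. -/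
@[ext]
structure ModMon (k n r : ℕ) where
  u : Fin k →₀ ℕ
  a : FreeMonoid (Fin n)
  i : Fin r
  b : FreeMonoid (Fin n)

instance {k n r : ℕ} [NeZero r] : Inhabited (ModMon k n r) := ⟨⟨0, 1, default, 1⟩⟩

/-- The mixed algebra `A = R[x₁,…,x_k]⟨y₁,…,y_n⟩`, realised as the monoid
algebra of the monoid of mixed monomials. -/
abbrev MixedAlg (R : Type) [CommRing R] (k n : ℕ) : Type := MonoidAlgebra R (MMon k n)

/-- The free `A`-bimodule `Σ = (A ⊗_{R[X]} A)^r`, realised as the free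
`R`-module on the module monomials `u·a·ε_i·b`. -/
abbrev SigModule (R : Type) [CommRing R] (k n r : ℕ) : Type := ModMon k n r →₀ R

section Defs

variable {R : Type} [CommRing R] {k n r : ℕ}

/-- The term `c·m` of `A` (an element of `T(A)` when `c ≠ 0`). -/
noncomputable def trm (m : MMon k n) (c : R) : MixedAlg R k n := MonoidAlgebra.single m c

/-- The word `b ∈ ⟨Y⟩`, viewed as an element of `A`. -/
noncomputable def wrd (b : FreeMonoid (Fin n)) : MixedAlg R k n :=
  MonoidAlgebra.single ⟨0, b⟩ 1

/-- Multiplication `m·σ` of a module monomial by a mixed monomial on the left. -/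
noncomputable def mulL (m : MMon k n) (σ : ModMon k n r) : ModMon k n r :=
  ⟨m.c + σ.u, m.w * σ.a, σ.i, σ.b⟩

/-- Multiplication `σ·m` of a module monomial by a mixed monomial on the right. -/
noncomputable def mulR (σ : ModMon k n r) (m : MMon k n) : ModMon k n r :=
  ⟨σ.u + m.c, σ.a, σ.i, σ.b * m.w⟩

/-- The two-sided multiple `m·σ·b` of a module monomial by a mixed monomial `m`
on the left and a word `b` on the right. -/
noncomputable def mulLR (m : MMon k n) (σ : ModMon k n r) (b : FreeMonoid (Fin n)) : ModMon k n r :=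
  ⟨m.c + σ.u, m.w * σ.a, σ.i, σ.b * b⟩

/-- The left action of `A` on the bimodule `Σ`. -/
noncomputable def actL (f : MixedAlg R k n) (α : SigModule R k n r) : SigModule R k n r :=
  Finsupp.sum f.coeff fun m cm => Finsupp.sum α fun σ cσ => Finsupp.single (mulL m σ) (cm * cσ)

/-- The right action of `A` on the bimodule `Σ`. -/
noncomputable def actR (α : SigModule R k n r) (f : MixedAlg R k n) : SigModule R k n r :=
  Finsupp.sum f.coeff fun m cm => Finsupp.sum α fun σ cσ => Finsupp.single (mulR σ m) (cσ * cm)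

/-- The two-sided multiple `t·α·b` of `α ∈ Σ` by the term `t = c·m` on the left
and the word `b` on the right. -/
noncomputable def scaleLR (m : MMon k n) (c : R) (α : SigModule R k n r)
    (b : FreeMonoid (Fin n)) : SigModule R k n r :=
  Finsupp.sum α fun σ cσ => Finsupp.single (mulLR m σ b) (c * cσ)

/-- The `A`-bimodule homomorphism `Σ → A`, `α ↦ ᾱ`, sending `ε_i` to `f_i`
(where `F i = f_i` are the generators). -/
noncomputable def barMap (F : Fin r → MixedAlg R k n) (α : SigModule R k n r) :
    MixedAlg R k n :=
  Finsupp.sum α fun σ cσ =>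
    trm ⟨σ.u, σ.a⟩ cσ * F σ.i * wrd σ.b

/-- The basis vector `ε_i` of `Σ`. -/
noncomputable def epsMod (i : Fin r) : SigModule R k n r :=
  Finsupp.single ⟨0, 1, i, 1⟩ 1

/-- The labeled module `I^{[Σ]}`: pairs `f^{[α]}` with `ᾱ = f`. -/
def Labeled (F : Fin r → MixedAlg R k n) (p : MixedAlg R k n × SigModule R k n r) : Prop :=
  barMap F p.2 = p.1

/-- A syzygy of `I^{[Σ]}`: an element `α ∈ Σ` with `ᾱ = 0`. -/
def IsSyzygy (F : Fin r → MixedAlg R k n) (γ : SigModule R k n r) : Prop :=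
  barMap F γ = 0

section Orders

variable [LinearOrder (MMon k n)] [LinearOrder (ModMon k n r)]

/-- The leading monomial of `f ∈ A` (with `LM 0 = ⊥`). -/
noncomputable def LMb (f : MixedAlg R k n) : WithBot (MMon k n) := f.coeff.support.max

/-- The leading monomial of `f ∈ A` (defaulting to `1` for `f = 0`). -/
noncomputable def LMd (f : MixedAlg R k n) : MMon k n := WithBot.unbotD 1 (f.coeff.support.max)

/-- The leading coefficient of `f ∈ A` (`0` for `f = 0`). -/
noncomputable def LC (f : MixedAlg R k n) : R := f.coeff (LMd f)

/-- The leading term of `f ∈ A`, as an element of `A` (`0` for `f = 0`). -/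
noncomputable def LTerm (f : MixedAlg R k n) : MixedAlg R k n := trm (LMd f) (LC f)

/-- The signature monomial of `α ∈ Σ` (with `⊥` for `α = 0`): the `⪯`-largest
monomial of the support of `α`. -/
noncomputable def sigb (α : SigModule R k n r) : WithBot (ModMon k n r) := α.support.max

variable [NeZero r]

/-- The signature monomial of `α ∈ Σ`, defaulting for `α = 0`. -/
noncomputable def sigMd (α : SigModule R k n r) : ModMon k n r :=
  WithBot.unbotD default (α.support.max)

/-- The coefficient of the signature of `α`. -/
noncomputable def sigC (α : SigModule R k n r) : R := α (sigMd α)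

/-- The signature `sig(α)` of `α ∈ Σ`, as a term, i.e. a single-term element of
`Σ` (`0` for `α = 0`).  Equality `sig α = sig β` of signatures as *terms* is
`sigT α = sigT β`; the relation `sig α ≃ sig β` is `sigb α = sigb β`; the
relation `sig α ≺ sig β` is `sigb α < sigb β`. -/
noncomputable def sigT (α : SigModule R k n r) : SigModule R k n r :=
  Finsupp.single (sigMd α) (sigC α)

end Orders

/-- The compatibility requirements on the chosen monomial ordering on `M(A)`
and module ordering on `M(Σ)`: both are compatible with multiplication,
both are well-orderings, and they are compatible with each other. -/
structure IsOrderSetting (k n r : ℕ) [LinearOrder (MMon k n)]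
    [LinearOrder (ModMon k n r)] : Prop where
  mon_wf : WellFounded ((· < ·) : MMon k n → MMon k n → Prop)
  mod_wf : WellFounded ((· < ·) : ModMon k n r → ModMon k n r → Prop)
  mon_mul : ∀ a b m m' : MMon k n, m ≤ m' → a * m * b ≤ a * m' * b
  mod_mul : ∀ (m : MMon k n) (b : FreeMonoid (Fin n)) (σ τ : ModMon k n r),
      σ ≤ τ → mulLR m σ b ≤ mulLR m τ b
  compat₁ : ∀ (u v : Fin k →₀ ℕ) (a b : FreeMonoid (Fin n)) (i : Fin r),
      (⟨u, a⟩ : MMon k n) < ⟨v, b⟩ ↔ (⟨u, a, i, 1⟩ : ModMon k n r) < ⟨v, b, i, 1⟩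
  compat₂ : ∀ (u v : Fin k →₀ ℕ) (a b : FreeMonoid (Fin n)) (i : Fin r),
      (⟨u, a⟩ : MMon k n) < ⟨v, b⟩ ↔ (⟨u, 1, i, a⟩ : ModMon k n r) < ⟨v, 1, i, b⟩

end Defs

/-! ### Ambiguities -/

/-- `WordAmb a b c d p q` says that `(a ⊗ b, c ⊗ d, p, q)` is an ambiguity
(overlap, inclusion or external) of the words `p` and `q`. -/
inductive WordAmb {n : ℕ} :
    FreeMonoid (Fin n) → FreeMonoid (Fin n) → FreeMonoid (Fin n) → FreeMonoid (Fin n) →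
    FreeMonoid (Fin n) → FreeMonoid (Fin n) → Prop
  | overlap₁ (a b p q : FreeMonoid (Fin n)) (h : a * p = q * b)
      (ha : a ≠ 1) (hb : b ≠ 1) (hla : a.length < q.length) (hlb : b.length < p.length) :
      WordAmb a 1 1 b p q
  | overlap₂ (a b p q : FreeMonoid (Fin n)) (h : p * a = b * q)
      (ha : a ≠ 1) (hb : b ≠ 1) (hla : a.length < q.length) (hlb : b.length < p.length) :
      WordAmb 1 a b 1 p q
  | inclusion₁ (a b p q : FreeMonoid (Fin n)) (h : p = a * q * b) :
      WordAmb 1 1 a b p q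
  | inclusion₂ (a b p q : FreeMonoid (Fin n)) (h : a * p * b = q) :
      WordAmb a b 1 1 p q
  | external₁ (m p q : FreeMonoid (Fin n)) :
      WordAmb 1 (m * q) (p * m) 1 p q
  | external₂ (m p q : FreeMonoid (Fin n)) :
      WordAmb (q * m) 1 1 (m * p) p q

section Amb

variable {R : Type} [CommRing R] {k n r : ℕ}
variable [LinearOrder (MMon k n)] [LinearOrder (ModMon k n r)]

/-- `IsAmb f g m₁ n₁ m₂ n₂` says that `(m₁ ⊗ n₁, m₂ ⊗ n₂)` is an ambiguity of the
(nonzero) polynomials `f` and `g`: an ambiguity of the word parts of their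
leading monomials, with left cofactors completed by `lcm(u,v)/u` resp.
`lcm(u,v)/v` on the commutative parts. -/
def IsAmb (f g : MixedAlg R k n) (m₁ : MMon k n) (n₁ : FreeMonoid (Fin n))
    (m₂ : MMon k n) (n₂ : FreeMonoid (Fin n)) : Prop :=
  ∃ a b c d : FreeMonoid (Fin n),
    WordAmb a b c d (LMd f).w (LMd g).w ∧
    m₁ = ⟨((LMd f).c ⊔ (LMd g).c) - (LMd f).c, a⟩ ∧ n₁ = b ∧
    m₂ = ⟨((LMd f).c ⊔ (LMd g).c) - (LMd g).c, c⟩ ∧ n₂ = d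

/-- The leading monomial `LM(a) = LM(m₁ f n₁) = LM(m₂ g n₂)` of an ambiguity. -/
noncomputable def ambLM (f : MixedAlg R k n) (m₁ : MMon k n) (n₁ : FreeMonoid (Fin n)) :
    MMon k n :=
  m₁ * LMd f * ⟨0, n₁⟩

variable [IsDomain R] [GCDMonoid R]

/-- The cofactor `lcmlc(f,g)/LC(f)`. -/
noncomputable def cofL (f g : MixedAlg R k n) : R :=
  Classical.choose (dvd_lcm_left (LC f) (LC g))

/-- The cofactor `lcmlc(f,g)/LC(g)`. -/
noncomputable def cofR (f g : MixedAlg R k n) : R :=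
  Classical.choose (dvd_lcm_right (LC f) (LC g))

variable [NeZero r]

/-- The signature `SIG(a) = max(sig(c_f m₁ α n₁), −sig(c_g m₂ β n₂))` (first in
case of tie) of an ambiguity `a = (m₁ ⊗ n₁, m₂ ⊗ n₂)` of `f^{[α]]`, `g^{[β]}`,
as a term (single-term element) of `Σ`. -/
noncomputable def ambSIG (f g : MixedAlg R k n) (α β : SigModule R k n r)
    (m₁ : MMon k n) (n₁ : FreeMonoid (Fin n)) (m₂ : MMon k n) (n₂ : FreeMonoid (Fin n)) :
    SigModule R k n r :=
  if sigb (scaleLR m₂ (cofR f g) β n₂) ≤ sigb (scaleLR m₁ (cofL f g) α n₁) then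
    sigT (scaleLR m₁ (cofL f g) α n₁)
  else
    - sigT (scaleLR m₂ (cofR f g) β n₂)

/-- An ambiguity is regular if `sig(m₁ α n₁) ≄ sig(m₂ β n₂)`. -/
def RegAmb (α β : SigModule R k n r) (m₁ : MMon k n) (n₁ : FreeMonoid (Fin n))
    (m₂ : MMon k n) (n₂ : FreeMonoid (Fin n)) : Prop :=
  sigb (scaleLR m₁ (1 : R) α n₁) ≠ sigb (scaleLR m₂ (1 : R) β n₂)

/-- An ambiguity is singular if `sig(c_f m₁ α n₁) = sig(c_g m₂ β n₂)`. -/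
def SingAmb (f g : MixedAlg R k n) (α β : SigModule R k n r) (m₁ : MMon k n)
    (n₁ : FreeMonoid (Fin n)) (m₂ : MMon k n) (n₂ : FreeMonoid (Fin n)) : Prop :=
  sigT (scaleLR m₁ (cofL f g) α n₁) = sigT (scaleLR m₂ (cofR f g) β n₂)

/-- The polynomial part of the S-polynomial of an ambiguity. -/
noncomputable def SPolP (f g : MixedAlg R k n) (m₁ : MMon k n) (n₁ : FreeMonoid (Fin n))
    (m₂ : MMon k n) (n₂ : FreeMonoid (Fin n)) : MixedAlg R k n :=
  trm m₁ (cofL f g) * f * wrd n₁ - trm m₂ (cofR f g) * g * wrd n₂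

/-- The module part of the S-polynomial of an ambiguity. -/
noncomputable def SPolM (f g : MixedAlg R k n) (α β : SigModule R k n r) (m₁ : MMon k n)
    (n₁ : FreeMonoid (Fin n)) (m₂ : MMon k n) (n₂ : FreeMonoid (Fin n)) :
    SigModule R k n r :=
  scaleLR m₁ (cofL f g) α n₁ - scaleLR m₂ (cofR f g) β n₂

/-- The polynomial part of the G-polynomial of an ambiguity, w.r.t. Bézout
coefficients `c`, `d`. -/
noncomputable def GPolP (c d : R) (f g : MixedAlg R k n) (m₁ : MMon k n)
    (n₁ : FreeMonoid (Fin n)) (m₂ : MMon k n) (n₂ : FreeMonoid (Fin n)) : MixedAlg R k n :=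
  trm m₁ c * f * wrd n₁ + trm m₂ d * g * wrd n₂

/-- The module part of the G-polynomial of an ambiguity, w.r.t. Bézout
coefficients `c`, `d`. -/
noncomputable def GPolM (c d : R) (α β : SigModule R k n r) (m₁ : MMon k n)
    (n₁ : FreeMonoid (Fin n)) (m₂ : MMon k n) (n₂ : FreeMonoid (Fin n)) :
    SigModule R k n r :=
  scaleLR m₁ c α n₁ + scaleLR m₂ d β n₂

/-- `BezoutFor c d f g`: `c, d` are Bézout coefficients for `LC f`, `LC g`. -/
def BezoutFor (c d : R) (f g : MixedAlg R k n) : Prop :=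
  c * LC f + d * LC g = gcd (LC f) (LC g)

end Amb

/-! ### Reductions, bases, cover -/

section Red

variable {R : Type} [CommRing R] {k n r : ℕ}
variable [LinearOrder (MMon k n)] [LinearOrder (ModMon k n r)]

/-- `f^{[α]}` is (top) sig-reducible by `G`: there are `g^{[β]} ∈ G`, a term
`t = c·m` and a word `b` with `LT(t g b) = LT(f) > LT(f - t g b)` and
`sig(t β b) ⪯ sig(α)`. -/
def SigReducible (G : Set (MixedAlg R k n × SigModule R k n r))
    (f : MixedAlg R k n) (α : SigModule R k n r) : Prop :=
  ∃ g β, (g, β) ∈ G ∧ ∃ (m : MMon k n) (c : R) (b : FreeMonoid (Fin n)), c ≠ 0 ∧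
    LTerm (trm m c * g * wrd b) = LTerm f ∧
    LMb (f - trm m c * g * wrd b) < LMb f ∧
    sigb (scaleLR m c β b) ≤ sigb α

/-- `f^{[α]}` is regular sig-reducible by `G`. -/
def RegSigReducible (G : Set (MixedAlg R k n × SigModule R k n r))
    (f : MixedAlg R k n) (α : SigModule R k n r) : Prop :=
  ∃ g β, (g, β) ∈ G ∧ ∃ (m : MMon k n) (c : R) (b : FreeMonoid (Fin n)), c ≠ 0 ∧
    LTerm (trm m c * g * wrd b) = LTerm f ∧
    LMb (f - trm m c * g * wrd b) < LMb f ∧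
    sigb (scaleLR m c β b) < sigb α

/-- `f^{[α]}` is super reducible by `G`: there are `g^{[β]} ∈ G`, a term `t` and
a word `b` with `sig(α) = sig(t β b)` (as terms) and `LM(f) = LM(t g b)`. -/
def SuperReducible [NeZero r] (G : Set (MixedAlg R k n × SigModule R k n r))
    (f : MixedAlg R k n) (α : SigModule R k n r) : Prop :=
  ∃ g β, (g, β) ∈ G ∧ ∃ (m : MMon k n) (c : R) (b : FreeMonoid (Fin n)), c ≠ 0 ∧
    sigT α = sigT (scaleLR m c β b) ∧
    LMb f = LMb (trm m c * g * wrd b)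

/-- `α ∈ Σ` is (top) reducible by the set `H ⊆ Σ`: `sig(α) = sig(t γ b)` for
some `γ ∈ H`, term `t` and word `b`. -/
def ModReducible [NeZero r] (H : Set (SigModule R k n r)) (α : SigModule R k n r) : Prop :=
  ∃ γ ∈ H, ∃ (m : MMon k n) (c : R) (b : FreeMonoid (Fin n)), c ≠ 0 ∧
    sigT α = sigT (scaleLR m c γ b)

/-- `G` is a (strong) signature Gröbner basis of `I^{[Σ]}`. -/
def IsSigGB (F : Fin r → MixedAlg R k n) (G : Set (MixedAlg R k n × SigModule R k n r)) :
    Prop :=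
  ∀ f α, barMap F α = f → f ≠ 0 → SigReducible G f α

/-- `G` is a signature Gröbner basis of `I^{[Σ]}` up to (module monomial)
signature `σ`. -/
def IsSigGBUpTo (F : Fin r → MixedAlg R k n)
    (G : Set (MixedAlg R k n × SigModule R k n r)) (σ : WithBot (ModMon k n r)) : Prop :=
  ∀ f α, barMap F α = f → f ≠ 0 → sigb α < σ → SigReducible G f α

/-- `H` is a syzygy basis of `I^{[Σ]}`. -/
def IsSyzBasis [NeZero r] (F : Fin r → MixedAlg R k n) (H : Set (SigModule R k n r)) :
    Prop :=
  ∀ γ, IsSyzygy F γ → γ ≠ 0 → ModReducible H γ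

variable [IsDomain R] [GCDMonoid R] [NeZero r]

/-- `G` is complete: the G-polynomials (w.r.t. non-singular Bézout coefficients)
of all ambiguities of `G` are sig-reducible by `G`. -/
def CompleteSet (G : Set (MixedAlg R k n × SigModule R k n r)) : Prop :=
  ∀ g₁ β₁ g₂ β₂, (g₁, β₁) ∈ G → (g₂, β₂) ∈ G →
    ∀ m₁ n₁ m₂ n₂, IsAmb g₁ g₂ m₁ n₁ m₂ n₂ →
      ∀ c d, BezoutFor c d g₁ g₂ →
        sigb (GPolM c d β₁ β₂ m₁ n₁ m₂ n₂) = sigb (ambSIG g₁ g₂ β₁ β₂ m₁ n₁ m₂ n₂) →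
        SigReducible G (GPolP c d g₁ g₂ m₁ n₁ m₂ n₂) (GPolM c d β₁ β₂ m₁ n₁ m₂ n₂)

/-- `MonLcm σ₁ σ₂ τ`: the least common multiple `lcm(σ₁,σ₂)` of the module
monomials `σ₁ = u₁a₁ε_jb₁`, `σ₂ = u₂a₂ε_jb₂` is defined and equals `τ`. -/
def MonLcm (σ₁ σ₂ τ : ModMon k n r) : Prop :=
  σ₁.i = σ₂.i ∧ τ.i = σ₁.i ∧ τ.u = σ₁.u ⊔ σ₂.u ∧
  ((τ.a = σ₁.a ∧ ∃ s, σ₁.a = s * σ₂.a) ∨ (τ.a = σ₂.a ∧ ∃ s, σ₂.a = s * σ₁.a)) ∧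
  ((τ.b = σ₁.b ∧ ∃ s, σ₁.b = σ₂.b * s) ∨ (τ.b = σ₂.b ∧ ∃ s, σ₂.b = σ₁.b * s))

/-- `H` is sig-complete: all sig-Combinations of elements of `H` are reducible
by `H`. -/
def SigCompleteSet (H : Set (SigModule R k n r)) : Prop :=
  ∀ γ₁ ∈ H, ∀ γ₂ ∈ H, ∀ τ, MonLcm (sigMd γ₁) (sigMd γ₂) τ →
    ∀ (m₁ : MMon k n) (b₁ : FreeMonoid (Fin n)) (m₂ : MMon k n) (b₂ : FreeMonoid (Fin n)),
      mulLR m₁ (sigMd γ₁) b₁ = τ → mulLR m₂ (sigMd γ₂) b₂ = τ →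
      ∀ c d : R, c * sigC γ₁ + d * sigC γ₂ = gcd (sigC γ₁) (sigC γ₂) →
        ModReducible H (scaleLR m₁ c γ₁ b₁ + scaleLR m₂ d γ₂ b₂)

/-- The ambiguity `a` (of `g₁^{[β₁]}`, `g₂^{[β₂]}`), with signature `SIG(a)` and
leading monomial `LM(a)`, is covered by `(G, H)`: there are `g^{[β]} ∈ G`,
`γ ∈ H`, terms `t, t'` (possibly `0`) and words `b, b'` with
`SIG(a) = sig(t β b) + sig(t' γ b')` and `LM(t g b) < LM(a)`. -/
def CoveredBy (G : Set (MixedAlg R k n × SigModule R k n r))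
    (H : Set (SigModule R k n r)) (Sig : SigModule R k n r) (Lm : MMon k n) : Prop :=
  ∃ g β, (g, β) ∈ G ∧ ∃ γ ∈ H,
    ∃ (m : MMon k n) (c : R) (b : FreeMonoid (Fin n))
      (m' : MMon k n) (c' : R) (b' : FreeMonoid (Fin n)),
      Sig = sigT (scaleLR m c β b) + sigT (scaleLR m' c' γ b') ∧
      LMb (trm m c * g * wrd b) < (Lm : WithBot (MMon k n))

end Red

/-! ### Auxiliary lemmas for the proof -/

section MyAux

set_option linter.unusedSectionVars false

open Finsupp

variable {R : Type} [CommRing R] {k n r : ℕ}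

/-- Max of a finset image under a monotone map. -/
lemma aux_max_image {M N : Type*} [LinearOrder M] [LinearOrder N] [DecidableEq N]
    {φ : M → N} (hmono : Monotone φ) (s : Finset M) :
    (s.image φ).max = s.max.map φ := by
  rcases s.eq_empty_or_nonempty with rfl | hs
  · simp
  · obtain ⟨m, hm⟩ := Finset.max_of_nonempty hs
    have hms : m ∈ s := Finset.mem_of_max hm
    rw [hm, WithBot.map_coe]
    apply le_antisymm
    · apply Finset.max_le
      intro b hb
      obtain ⟨a, ha, rfl⟩ := Finset.mem_image.1 hb
      have : (↑a : WithBot M) ≤ ↑m := hm ▸ Finset.le_max ha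
      exact WithBot.coe_le_coe.2 (hmono (WithBot.coe_le_coe.1 this))
    · exact Finset.le_max (Finset.mem_image_of_mem φ hms)

lemma aux_coeff_max {M : Type*} [LinearOrder M] {v : M →₀ R} {Λ : M}
    (h : v.support.max = ↑Λ) : v Λ ≠ 0 :=
  Finsupp.mem_support_iff.1 (Finset.mem_of_max h)

lemma aux_ne_zero_of_max_coe {M : Type*} [LinearOrder M] {v : M →₀ R} {Λ : M}
    (h : v.support.max = ↑Λ) : v ≠ 0 := by
  intro hv
  rw [hv] at h
  simp at h

lemma aux_max_eq_of {M : Type*} [LinearOrder M] {v : M →₀ R} {Λ : M}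
    (h0 : v Λ ≠ 0) (hle : ∀ τ ∈ v.support, τ ≤ Λ) :
    v.support.max = (Λ : WithBot M) := by
  apply le_antisymm
  · exact Finset.max_le fun τ hτ => WithBot.coe_le_coe.2 (hle τ hτ)
  · exact Finset.le_max (Finsupp.mem_support_iff.2 h0)

lemma aux_le_max {M : Type*} [LinearOrder M] {v : M →₀ R} {Λ : M}
    (h : v.support.max = ↑Λ) {x : M} (hx : x ∈ v.support) : x ≤ Λ := by
  have := Finset.le_max hx
  rw [h] at this
  exact WithBot.coe_le_coe.1 this

lemma aux_max_add_eq {M : Type*} [LinearOrder M] {α β : M →₀ R}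
    (h : β.support.max < α.support.max) :
    (α + β).support.max = α.support.max := by
  obtain ⟨Λ, hΛ⟩ : ∃ Λ : M, α.support.max = ↑Λ := by
    cases hα : α.support.max with
    | bot => rw [hα] at h; exact absurd h (by simp)
    | coe Λ => exact ⟨Λ, rfl⟩
  have hβΛ : β Λ = 0 := by
    by_contra hne
    have h1 : (↑Λ : WithBot M) ≤ β.support.max := Finset.le_max (Finsupp.mem_support_iff.2 hne)
    rw [hΛ] at h
    exact absurd (lt_of_le_of_lt h1 h) (lt_irrefl _)
  rw [hΛ]
  apply aux_max_eq_of
  · rw [Finsupp.add_apply, hβΛ, add_zero]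
    exact aux_coeff_max hΛ
  · intro τ hτ
    rcases Finset.mem_union.1 (Finsupp.support_add hτ) with h1 | h2
    · exact aux_le_max hΛ h1
    · have := Finset.le_max h2
      rw [hΛ] at h
      exact WithBot.coe_le_coe.1 (le_of_lt (lt_of_le_of_lt this h))

lemma aux_mapDomain_max {M N : Type*} [LinearOrder M] [LinearOrder N]
    {φ : M → N} (hmono : Monotone φ) (hinj : Function.Injective φ)
    (v : M →₀ R) :
    (Finsupp.mapDomain φ v).support.max = v.support.max.map φ := by
  classical
  rw [Finsupp.mapDomain_support_of_injective hinj, aux_max_image hmono]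

lemma aux_withbot_lt_reflect {M : Type*} [LinearOrder M] {f : M → M} (hf : Monotone f)
    {x y : WithBot M} (h : x.map f < y.map f) : x < y := by
  by_contra hxy
  have h2 : y ≤ x := not_lt.1 hxy
  have h3 : y.map f ≤ x.map f := hf.withBot_map h2
  exact absurd (lt_of_le_of_lt h3 h) (lt_irrefl _)

/-! #### Multiplication maps -/

lemma aux_mulLR_mk (m : MMon k n) (σ : ModMon k n r) (b : FreeMonoid (Fin n)) :
    mulLR m σ b = ⟨m.c + σ.u, m.w * σ.a, σ.i, σ.b * b⟩ := rfl

lemma aux_finsupp_add_left_cancel {u v w : Fin k →₀ ℕ} (h : u + v = u + w) : v = w := by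
  ext a
  have := DFunLike.congr_fun h a
  simp only [Finsupp.add_apply] at this
  omega

lemma aux_finsupp_add_right_cancel {u v w : Fin k →₀ ℕ} (h : v + u = w + u) : v = w := by
  ext a
  have := DFunLike.congr_fun h a
  simp only [Finsupp.add_apply] at this
  omega

lemma aux_mulLR_injective (m : MMon k n) (b : FreeMonoid (Fin n)) :
    Function.Injective (fun σ : ModMon k n r => mulLR m σ b) := by
  intro σ τ h
  simp only [mulLR, ModMon.mk.injEq] at h
  obtain ⟨h1, h2, h3, h4⟩ := h
  ext : 1
  · exact aux_finsupp_add_left_cancel h1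
  · exact mul_left_cancel h2
  · exact h3
  · exact mul_right_cancel h4

lemma aux_mmon_mul_injective (m b : MMon k n) :
    Function.Injective (fun x : MMon k n => m * x * b) := by
  intro x y h
  simp only [MMon.ext_iff, MMon.mul_c, MMon.mul_w] at h
  obtain ⟨h1, h2⟩ := h
  ext : 1
  · exact aux_finsupp_add_left_cancel (aux_finsupp_add_right_cancel h1)
  · exact mul_left_cancel (mul_right_cancel h2)

/-! #### Products as `mapDomain` -/

lemma aux_single_mul (m : MMon k n) (c : R) (g : MixedAlg R k n) :
    (MonoidAlgebra.single m c * g).coeff = Finsupp.mapDomain (fun x => m * x) (c • g.coeff) := by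
  rw [MonoidAlgebra.mul_def, MonoidAlgebra.coeff_finsuppSum, Finsupp.mapDomain]
  rw [MonoidAlgebra.coeff_single, Finsupp.sum_single_index (by simp)]
  rw [Finsupp.sum_smul_index' (by simp)]
  simp [smul_eq_mul]

lemma aux_mul_single (b : MMon k n) (g : MixedAlg R k n) :
    (g * MonoidAlgebra.single b (1 : R)).coeff = Finsupp.mapDomain (fun x => x * b) g.coeff := by
  rw [MonoidAlgebra.mul_def, MonoidAlgebra.coeff_finsuppSum, Finsupp.mapDomain]
  apply Finsupp.sum_congr
  intro x hx
  rw [MonoidAlgebra.coeff_single, Finsupp.sum_single_index (by simp)]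
  simp

lemma aux_trm_mul_mul (m : MMon k n) (c : R) (g : MixedAlg R k n) (b : FreeMonoid (Fin n)) :
    (trm m c * g * wrd b).coeff
      = Finsupp.mapDomain (fun x => m * x * (⟨0, b⟩ : MMon k n)) (c • g.coeff) := by
  rw [trm, wrd, aux_mul_single, aux_single_mul, ← Finsupp.mapDomain_comp]
  rfl

lemma aux_scaleLR_eq (m : MMon k n) (c : R) (α : SigModule R k n r) (b : FreeMonoid (Fin n)) :
    scaleLR m c α b = Finsupp.mapDomain (fun σ => mulLR m σ b) (c • α) := by
  rw [scaleLR, Finsupp.mapDomain]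
  rw [Finsupp.sum_smul_index' (by simp)]
  simp [smul_eq_mul]

lemma aux_scaleLR_zero (m : MMon k n) (α : SigModule R k n r) (b : FreeMonoid (Fin n)) :
    scaleLR m (0 : R) α b = 0 := by
  rw [aux_scaleLR_eq]
  simp

lemma aux_scaleLR_zero' (m : MMon k n) (c : R) (b : FreeMonoid (Fin n)) :
    scaleLR m c (0 : SigModule R k n r) b = 0 := by
  rw [aux_scaleLR_eq]
  simp

section WithOrders

variable [LinearOrder (MMon k n)] [LinearOrder (ModMon k n r)]

lemma aux_LMb_coe {f : MixedAlg R k n} (hf : f ≠ 0) : LMb f = ↑(LMd f) := by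
  obtain ⟨m, hm⟩ := Finset.max_of_nonempty (Finsupp.support_nonempty_iff.2 (fun h => hf (MonoidAlgebra.coeff_eq_zero.1 h)))
  rw [LMb, LMd, hm]
  rfl

lemma aux_LC_ne_zero {f : MixedAlg R k n} (hf : f ≠ 0) : LC f ≠ 0 :=
  aux_coeff_max (aux_LMb_coe hf)

lemma aux_LMd_of_max {f : MixedAlg R k n} {Λ : MMon k n}
    (h : f.coeff.support.max = ↑Λ) : LMd f = Λ := by
  rw [LMd, h]
  rfl

/-- Leading data of `trm m c * g * wrd b`. -/
lemma aux_prod_leading (hord : IsOrderSetting k n r) {g : MixedAlg R k n} (hg : g ≠ 0)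
    (m : MMon k n) {c : R} (hc : c ≠ 0) (b : FreeMonoid (Fin n)) [IsDomain R] :
    (trm m c * g * wrd b).coeff.support.max = ↑(m * LMd g * (⟨0, b⟩ : MMon k n)) ∧
    LMd (trm m c * g * wrd b) = m * LMd g * ⟨0, b⟩ ∧
    LC (trm m c * g * wrd b) = c * LC g := by
  have hmono : Monotone (fun x : MMon k n => m * x * (⟨0, b⟩ : MMon k n)) :=
    fun x y hxy => hord.mon_mul _ _ _ _ hxy
  have hinj := aux_mmon_mul_injective (k := k) (n := n) m ⟨0, b⟩
  have h1 : (trm m c * g * wrd b).coeff.support.max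
      = ↑(m * LMd g * (⟨0, b⟩ : MMon k n)) := by
    rw [aux_trm_mul_mul, aux_mapDomain_max hmono hinj, Finsupp.support_smul_eq hc]
    have : (g.coeff.support.max) = ↑(LMd g) := aux_LMb_coe hg
    rw [this]
    rfl
  refine ⟨h1, aux_LMd_of_max h1, ?_⟩
  rw [LC, aux_LMd_of_max h1, aux_trm_mul_mul,
    Finsupp.mapDomain_apply hinj (c • g.coeff) (LMd g), Finsupp.smul_apply, smul_eq_mul]
  rfl

variable [NeZero r]

lemma aux_sigb_coe {α : SigModule R k n r} (hα : α ≠ 0) : sigb α = ↑(sigMd α) := by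
  obtain ⟨m, hm⟩ := Finset.max_of_nonempty (Finsupp.support_nonempty_iff.2 hα)
  rw [sigb, sigMd, hm]
  rfl

lemma aux_sigC_ne_zero {α : SigModule R k n r} (hα : α ≠ 0) : sigC α ≠ 0 :=
  aux_coeff_max (aux_sigb_coe hα)

lemma aux_sigb_sigT (α : SigModule R k n r) : sigb (sigT α) = sigb α := by
  by_cases hα : α = 0
  · subst hα
    have : sigC (0 : SigModule R k n r) = 0 := rfl
    rw [sigT, this, Finsupp.single_zero]
  · rw [aux_sigb_coe hα, sigT, sigb,
      Finsupp.support_single_ne_zero _ (aux_sigC_ne_zero hα)]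
    rfl

lemma aux_sigb_scaleLR (hord : IsOrderSetting k n r) [IsDomain R]
    (m : MMon k n) {c : R} (hc : c ≠ 0) (α : SigModule R k n r) (b : FreeMonoid (Fin n)) :
    sigb (scaleLR m c α b) = (sigb α).map (fun σ => mulLR m σ b) := by
  have hmono : Monotone (fun σ : ModMon k n r => mulLR m σ b) :=
    fun σ τ h => hord.mod_mul _ _ _ _ h
  have h1 : (scaleLR m c α b).support.max
      = WithBot.map (fun σ => mulLR m σ b) (α.support.max) := by
    rw [aux_scaleLR_eq, aux_mapDomain_max hmono (aux_mulLR_injective m b),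
      Finsupp.support_smul_eq hc]
  exact h1

end WithOrders

/-! #### Bézout coefficients with nonzero first coefficient -/

lemma aux_exists_bezout [IsDomain R] [IsPrincipalIdealRing R] [GCDMonoid R]
    {a b : R} (ha : a ≠ 0) (hb : b ≠ 0) :
    ∃ c d : R, c * a + d * b = gcd a b ∧ c ≠ 0 := by
  have hP := IsPrincipalIdealRing.principal (Ideal.span ({a, b} : Set R))
  obtain ⟨g', hg'⟩ := hP.principal
  have hga : g' ∣ a := by
    have h1 : a ∈ Ideal.span ({a, b} : Set R) := Ideal.subset_span (by simp)
    rw [hg'] at h1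
    exact Ideal.mem_span_singleton.1 h1
  have hgb : g' ∣ b := by
    have h1 : b ∈ Ideal.span ({a, b} : Set R) := Ideal.subset_span (by simp)
    rw [hg'] at h1
    exact Ideal.mem_span_singleton.1 h1
  have hmem : gcd a b ∈ Ideal.span ({a, b} : Set R) := by
    rw [hg']
    exact Ideal.mem_span_singleton.2 (dvd_gcd hga hgb)
  obtain ⟨c, d, hcd⟩ := Ideal.mem_span_pair.1 hmem
  obtain ⟨ea, hea⟩ := gcd_dvd_left a b
  obtain ⟨eb, heb⟩ := gcd_dvd_right a b
  by_cases hc : c = 0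
  · subst hc
    refine ⟨eb, d - ea, ?_, ?_⟩
    · have : eb * a = ea * b := by
        have h1 : eb * a = eb * (gcd a b * ea) := by rw [← hea]
        have h2 : ea * b = ea * (gcd a b * eb) := by rw [← heb]
        rw [h1, h2]; ring
      calc eb * a + (d - ea) * b = 0 * a + d * b + (eb * a - ea * b) := by ring
        _ = gcd a b := by rw [this]; rw [← hcd]; ring
    · intro h0
      rw [h0, mul_zero] at heb
      exact hb heb
  · exact ⟨c, d, hcd, hc⟩

/-! #### Word combinatorics -/

lemma aux_fm_split {X : Type*} {a b c d : FreeMonoid X} (h : a * b = c * d) :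
    (∃ t, c = a * t ∧ b = t * d) ∨ ∃ t, a = c * t ∧ d = t * b := by
  have h' : a.toList ++ b.toList = c.toList ++ d.toList := by
    simpa [FreeMonoid.toList_mul] using congrArg FreeMonoid.toList h
  rcases List.append_eq_append_iff.1 h' with ⟨t, h1, h2⟩ | ⟨t, h1, h2⟩
  · left
    refine ⟨FreeMonoid.ofList t, ?_, ?_⟩
    · apply FreeMonoid.toList.injective
      simpa [FreeMonoid.toList_mul] using h1
    · apply FreeMonoid.toList.injective
      simpa [FreeMonoid.toList_mul] using h2
  · right
    refine ⟨FreeMonoid.ofList t, ?_, ?_⟩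
    · apply FreeMonoid.toList.injective
      simpa [FreeMonoid.toList_mul] using h1
    · apply FreeMonoid.toList.injective
      simpa [FreeMonoid.toList_mul] using h2

lemma aux_wordamb_eq {A B C D p q : FreeMonoid (Fin n)} (h : WordAmb A B C D p q) :
    A * p * B = C * q * D := by
  cases h with
  | overlap₁ a b p q h ha hb hla hlb => simpa using h
  | overlap₂ a b p q h ha hb hla hlb => simpa using h
  | inclusion₁ a b p q h => simpa using h
  | inclusion₂ a b p q h => simpa using h
  | external₁ m p q => simp [mul_assoc]
  | external₂ m p q => simp [mul_assoc]

lemma aux_len_pos {X : Type*} {s : FreeMonoid X} (hs : s ≠ 1) : 0 < s.length :=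
  Nat.pos_of_ne_zero fun h0 => hs (FreeMonoid.length_eq_zero.1 h0)

lemma aux_word_cases (p q l₁ r₁ l₂ r₂ : FreeMonoid (Fin n))
    (h : l₁ * p * r₁ = l₂ * q * r₂) :
    ∃ A B C D w₃ b₃, WordAmb A B C D p q ∧
      l₁ = w₃ * A ∧ r₁ = B * b₃ ∧ l₂ = w₃ * C ∧ r₂ = D * b₃ := by
  have h' : l₁ * (p * r₁) = l₂ * (q * r₂) := by
    rw [← mul_assoc, ← mul_assoc]; exact h
  rcases aux_fm_split h' with ⟨t, hl₂, hpr⟩ | ⟨t, hl₁, hqr⟩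
  · -- l₂ = l₁ * t, p * r₁ = t * (q * r₂)
    rcases aux_fm_split hpr with ⟨s, hts, hr₁⟩ | ⟨s, hp, hqr⟩
    · -- t = p * s, r₁ = s * (q * r₂) : external₁
      exact ⟨1, s * q, p * s, 1, l₁, r₂, WordAmb.external₁ s p q,
        (mul_one l₁).symm, by rw [hr₁, mul_assoc],
        by rw [hl₂, hts], (one_mul r₂).symm⟩
    · -- p = t * s, q * r₂ = s * r₁
      rcases aux_fm_split hqr with ⟨e, hse, hr₂⟩ | ⟨e, hq, hr₁⟩
      · -- s = q * e, r₂ = e * r₁ : inclusion₁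
        exact ⟨1, 1, t, e, l₁, r₁, WordAmb.inclusion₁ t e p q (by rw [hp, hse, mul_assoc]),
          (mul_one l₁).symm, (one_mul r₁).symm, hl₂, hr₂⟩
      · -- q = s * e, r₁ = e * r₂
        by_cases hs1 : s = 1
        · -- p = t, q = e adjacent : external₁ with middle 1
          refine ⟨1, 1 * q, p * 1, 1, l₁, r₂, WordAmb.external₁ 1 p q,
            (mul_one l₁).symm, ?_, ?_, (one_mul r₂).symm⟩
          · rw [one_mul, hr₁, hq, hs1, one_mul]
          · rw [mul_one, hl₂, hp, hs1, mul_one]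
        by_cases ht1 : t = 1
        · -- q = p * e : inclusion₂
          refine ⟨1, e, 1, 1, l₁, r₂, WordAmb.inclusion₂ 1 e p q ?_,
            (mul_one l₁).symm, hr₁, ?_, (one_mul r₂).symm⟩
          · rw [one_mul, hq, hp, ht1, one_mul]
          · rw [hl₂, ht1]
        by_cases he1 : e = 1
        · -- q = s, p = t * q : inclusion₁
          refine ⟨1, 1, t, 1, l₁, r₁, WordAmb.inclusion₁ t 1 p q ?_,
            (mul_one l₁).symm, (one_mul r₁).symm, hl₂, ?_⟩
          · rw [hp, hq, he1, mul_one, mul_one]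
          · rw [one_mul, hr₁, he1, one_mul]
        · -- overlap₂
          refine ⟨1, e, t, 1, l₁, r₂, WordAmb.overlap₂ e t p q ?_ he1 ht1 ?_ ?_,
            (mul_one l₁).symm, hr₁, hl₂, (one_mul r₂).symm⟩
          · rw [hp, hq, mul_assoc]
          · rw [hq, FreeMonoid.length_mul]
            have := aux_len_pos hs1
            omega
          · rw [hp, FreeMonoid.length_mul]
            have := aux_len_pos hs1
            omega
  · -- l₁ = l₂ * t, q * r₂ = t * (p * r₁)
    rcases aux_fm_split hqr with ⟨s, hts, hr₂⟩ | ⟨s, hq, hpr⟩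
    · -- t = q * s, r₂ = s * (p * r₁) : external₂
      exact ⟨q * s, 1, 1, s * p, l₂, r₁, WordAmb.external₂ s p q,
        by rw [hl₁, hts], (one_mul r₁).symm, (mul_one l₂).symm,
        by rw [hr₂, mul_assoc]⟩
    · -- q = t * s, p * r₁ = s * r₂
      rcases aux_fm_split hpr with ⟨e, hse, hr₁⟩ | ⟨e, hp, hr₂⟩
      · -- s = p * e, r₁ = e * r₂ : inclusion₂
        exact ⟨t, e, 1, 1, l₂, r₂, WordAmb.inclusion₂ t e p q (by rw [hq, hse, mul_assoc]),
          hl₁, hr₁, (mul_one l₂).symm, (one_mul r₂).symm⟩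
      · -- p = s * e, r₂ = e * r₁
        by_cases hs1 : s = 1
        · -- q = t, p = e : external₂ with middle 1
          refine ⟨q * 1, 1, 1, 1 * p, l₂, r₁, WordAmb.external₂ 1 p q,
            ?_, (one_mul r₁).symm, (mul_one l₂).symm, ?_⟩
          · rw [mul_one, hl₁, hq, hs1, mul_one]
          · rw [one_mul, hr₂, hp, hs1, one_mul]
        by_cases ht1 : t = 1
        · -- p = q * e : inclusion₁
          refine ⟨1, 1, 1, e, l₂, r₁, WordAmb.inclusion₁ 1 e p q ?_,
            ?_, (one_mul r₁).symm, (mul_one l₂).symm, hr₂⟩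
          · rw [hp, hq, ht1, one_mul, one_mul]
          · rw [hl₁, ht1, mul_one]
        by_cases he1 : e = 1
        · -- p = s, q = t * p : inclusion₂
          refine ⟨t, 1, 1, 1, l₂, r₁, WordAmb.inclusion₂ t 1 p q ?_,
            hl₁, (one_mul r₁).symm, (mul_one l₂).symm, ?_⟩
          · rw [hp, hq, he1, mul_one, mul_one]
          · rw [one_mul, hr₂, he1, one_mul]
        · -- overlap₁
          refine ⟨t, 1, 1, e, l₂, r₁, WordAmb.overlap₁ t e p q ?_ ht1 he1 ?_ ?_,
            hl₁, (one_mul r₁).symm, (mul_one l₂).symm, hr₂⟩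
          · rw [hp, hq, mul_assoc]
          · rw [hq, FreeMonoid.length_mul]
            have := aux_len_pos hs1
            omega
          · rw [hp, FreeMonoid.length_mul]
            have := aux_len_pos hs1
            omega

lemma aux_withbot_map_map {M : Type*} (f g : M → M) (x : WithBot M) :
    (x.map f).map g = x.map (fun a => g (f a)) := by
  cases x <;> rfl

end MyAux

/-- Lemma 4.9: significance of G-polynomials.  If
`LT(f) = LT(t₁ g₁ b₁) + LT(t₂ g₂ b₂)` and `sig(t₁ β₁ b₁) ≻ sig(t₂ β₂ b₂)`,
then there exist a G-polynomial `g₃^{[β₃]} = G-Pol(a)` of some ambiguity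
`a ∈ amb(g₁^{[β₁]}, g₂^{[β₂]})` (with Bézout coefficients chosen so that
`sig(G-Pol(a)) ≃ SIG(a)`), `t₃ ∈ T(A)` and `b₃ ∈ ⟨Y⟩` such that
`LT(t₃ g₃ b₃) = LT(f)` and `sig(t₃ β₃ b₃) ≃ sig(t₁ β₁ b₁)`. -/
theorem lemma_gpol
    {R : Type} [CommRing R] [IsDomain R] [IsPrincipalIdealRing R] [GCDMonoid R]
    {k n r : ℕ} [NeZero r]
    [LinearOrder (MMon k n)] [LinearOrder (ModMon k n r)]
    (hord : IsOrderSetting k n r)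
    (F : Fin r → MixedAlg R k n)
    (f g₁ g₂ : MixedAlg R k n) (α β₁ β₂ : SigModule R k n r)
    (hlabf : barMap F α = f) (hlab₁ : barMap F β₁ = g₁) (hlab₂ : barMap F β₂ = g₂)
    (hf : f ≠ 0) (hg₁ : g₁ ≠ 0) (hg₂ : g₂ ≠ 0)
    (m₁ m₂ : MMon k n) (c₁ c₂ : R) (b₁ b₂ : FreeMonoid (Fin n))
    (hc₁ : c₁ ≠ 0) (hc₂ : c₂ ≠ 0)
    (hlt : LTerm f = LTerm (trm m₁ c₁ * g₁ * wrd b₁) + LTerm (trm m₂ c₂ * g₂ * wrd b₂))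
    (hsig : sigb (scaleLR m₂ c₂ β₂ b₂) < sigb (scaleLR m₁ c₁ β₁ b₁)) :
    ∃ M₁ N₁ M₂ N₂, IsAmb g₁ g₂ M₁ N₁ M₂ N₂ ∧
      ∃ c d : R, BezoutFor c d g₁ g₂ ∧
        sigb (GPolM c d β₁ β₂ M₁ N₁ M₂ N₂) = sigb (ambSIG g₁ g₂ β₁ β₂ M₁ N₁ M₂ N₂) ∧
        ∃ (m₃ : MMon k n) (c₃ : R) (b₃ : FreeMonoid (Fin n)), c₃ ≠ 0 ∧
          LTerm (trm m₃ c₃ * GPolP c d g₁ g₂ M₁ N₁ M₂ N₂ * wrd b₃) = LTerm f ∧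
          sigb (scaleLR m₃ c₃ (GPolM c d β₁ β₂ M₁ N₁ M₂ N₂) b₃)
            = sigb (scaleLR m₁ c₁ β₁ b₁) := by
  classical
  -- leading data of the two given products
  obtain ⟨hmax₁, hLMd₁, hLC₁⟩ := aux_prod_leading hord hg₁ m₁ hc₁ b₁
  obtain ⟨hmax₂, hLMd₂, hLC₂⟩ := aux_prod_leading hord hg₂ m₂ hc₂ b₂
  have hd₁ : c₁ * LC g₁ ≠ 0 := mul_ne_zero hc₁ (aux_LC_ne_zero hg₁)
  have hd₂ : c₂ * LC g₂ ≠ 0 := mul_ne_zero hc₂ (aux_LC_ne_zero hg₂)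
  have hLCf : LC f ≠ 0 := aux_LC_ne_zero hf
  set W₁ : MMon k n := m₁ * LMd g₁ * ⟨0, b₁⟩ with hW₁def
  set W₂ : MMon k n := m₂ * LMd g₂ * ⟨0, b₂⟩ with hW₂def
  have hprod₁ : (LTerm (trm m₁ c₁ * g₁ * wrd b₁)).coeff = Finsupp.single W₁ (c₁ * LC g₁) := by
    rw [LTerm, hLMd₁, hLC₁]; rfl
  have hprod₂ : (LTerm (trm m₂ c₂ * g₂ * wrd b₂)).coeff = Finsupp.single W₂ (c₂ * LC g₂) := by
    rw [LTerm, hLMd₂, hLC₂]; rfl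
  have hlt' : (Finsupp.single (LMd f) (LC f) : MMon k n →₀ R)
      = Finsupp.single W₁ (c₁ * LC g₁) + Finsupp.single W₂ (c₂ * LC g₂) := by
    rw [← hprod₁, ← hprod₂]; exact congrArg MonoidAlgebra.coeff hlt
  -- the two leading monomials coincide with LMd f
  have hWeq : W₁ = W₂ := by
    by_contra hne
    have e1 : LMd f = W₁ := by
      by_contra hx
      have h1 := DFunLike.congr_fun hlt' W₁
      rw [Finsupp.add_apply, Finsupp.single_eq_of_ne' hx, Finsupp.single_eq_same,
        Finsupp.single_eq_of_ne' (fun h : W₂ = W₁ => hne h.symm), add_zero] at h1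
      exact hd₁ h1.symm
    have e2 : LMd f = W₂ := by
      by_contra hx
      have h2 := DFunLike.congr_fun hlt' W₂
      rw [Finsupp.add_apply, Finsupp.single_eq_of_ne' hx, Finsupp.single_eq_of_ne' hne,
        Finsupp.single_eq_same, zero_add] at h2
      exact hd₂ h2.symm
    exact hne (e1.symm.trans e2)
  have hsum : (Finsupp.single (LMd f) (LC f) : MMon k n →₀ R)
      = Finsupp.single W₁ (c₁ * LC g₁ + c₂ * LC g₂) := by
    rw [hlt', ← hWeq, Finsupp.single_add]
  have hWf : LMd f = W₁ ∧ LC f = c₁ * LC g₁ + c₂ * LC g₂ := by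
    rcases (Finsupp.single_eq_single_iff _ _ _ _).1 hsum with ⟨h1, h2⟩ | ⟨h1, h2⟩
    · exact ⟨h1, h2⟩
    · exact absurd h1 hLCf
  have hCf : LC f = c₁ * LC g₁ + c₂ * LC g₂ := hWf.2
  -- decompose the monomial equality
  have hcomm : m₁.c + (LMd g₁).c = m₂.c + (LMd g₂).c := by
    have h := congrArg MMon.c hWeq
    simpa [hW₁def, hW₂def] using h
  have hcommP : ∀ x, m₁.c x + (LMd g₁).c x = m₂.c x + (LMd g₂).c x := by
    intro x
    have := DFunLike.congr_fun hcomm x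
    simpa using this
  have hword : m₁.w * (LMd g₁).w * b₁ = m₂.w * (LMd g₂).w * b₂ := by
    have h := congrArg MMon.w hWeq
    simpa [hW₁def, hW₂def] using h
  obtain ⟨A, B, C, D, w₃, b₃w, hamb, hl₁, hr₁, hl₂, hr₂⟩ :=
    aux_word_cases (LMd g₁).w (LMd g₂).w m₁.w b₁ m₂.w b₂ hword
  set M₁ : MMon k n := ⟨(LMd g₁).c ⊔ (LMd g₂).c - (LMd g₁).c, A⟩ with hM₁def
  set M₂ : MMon k n := ⟨(LMd g₁).c ⊔ (LMd g₂).c - (LMd g₂).c, C⟩ with hM₂def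
  set m₃ : MMon k n := ⟨m₁.c + (LMd g₁).c - ((LMd g₁).c ⊔ (LMd g₂).c), w₃⟩ with hm₃def
  -- composition identities
  have hcompose₁ : ∀ σ : ModMon k n r, mulLR m₃ (mulLR M₁ σ B) b₃w = mulLR m₁ σ b₁ := by
    intro σ
    simp only [mulLR, hM₁def, hm₃def]
    ext : 1
    · ext x
      simp only [Finsupp.add_apply, Finsupp.tsub_apply, Finsupp.sup_apply]
      have := hcommP x
      omega
    · show w₃ * (A * σ.a) = m₁.w * σ.a
      rw [hl₁, mul_assoc]
    · rfl
    · show σ.b * B * b₃w = σ.b * b₁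
      rw [hr₁, mul_assoc]
  have hcompose₂ : ∀ σ : ModMon k n r, mulLR m₃ (mulLR M₂ σ D) b₃w = mulLR m₂ σ b₂ := by
    intro σ
    simp only [mulLR, hM₂def, hm₃def]
    ext : 1
    · ext x
      simp only [Finsupp.add_apply, Finsupp.tsub_apply, Finsupp.sup_apply]
      have := hcommP x
      omega
    · show w₃ * (C * σ.a) = m₂.w * σ.a
      rw [hl₂, mul_assoc]
    · rfl
    · show σ.b * D * b₃w = σ.b * b₂
      rw [hr₂, mul_assoc]
  have hφcomp₁ : ∀ x : MMon k n,
      m₃ * (M₁ * x * ⟨0, B⟩) * ⟨0, b₃w⟩ = m₁ * x * (⟨0, b₁⟩ : MMon k n) := by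
    intro x
    ext : 1
    · show m₃.c + (M₁.c + x.c + 0) + 0 = m₁.c + x.c + 0
      ext y
      simp only [hm₃def, hM₁def, Finsupp.add_apply, Finsupp.tsub_apply, Finsupp.sup_apply,
        Finsupp.coe_zero, Pi.zero_apply]
      have := hcommP y
      omega
    · show m₃.w * (M₁.w * x.w * B) * b₃w = m₁.w * x.w * b₁
      simp only [hm₃def, hM₁def]
      show w₃ * (A * x.w * B) * b₃w = m₁.w * x.w * b₁
      rw [hl₁, hr₁]
      simp [mul_assoc]
  have hφcomp₂ : ∀ x : MMon k n,
      m₃ * (M₂ * x * ⟨0, D⟩) * ⟨0, b₃w⟩ = m₂ * x * (⟨0, b₂⟩ : MMon k n) := by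
    intro x
    ext : 1
    · show m₃.c + (M₂.c + x.c + 0) + 0 = m₂.c + x.c + 0
      ext y
      simp only [hm₃def, hM₂def, Finsupp.add_apply, Finsupp.tsub_apply, Finsupp.sup_apply,
        Finsupp.coe_zero, Pi.zero_apply]
      have := hcommP y
      omega
    · show m₃.w * (M₂.w * x.w * D) * b₃w = m₂.w * x.w * b₂
      simp only [hm₃def, hM₂def]
      show w₃ * (C * x.w * D) * b₃w = m₂.w * x.w * b₂
      rw [hl₂, hr₂]
      simp [mul_assoc]
  set Λ : MMon k n := M₁ * LMd g₁ * ⟨0, B⟩ with hΛdef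
  have hΛ₂ : M₂ * LMd g₂ * (⟨0, D⟩ : MMon k n) = Λ := by
    ext : 1
    · show M₂.c + (LMd g₂).c + 0 = M₁.c + (LMd g₁).c + 0
      ext y
      simp only [hM₁def, hM₂def, Finsupp.add_apply, Finsupp.tsub_apply, Finsupp.sup_apply,
        Finsupp.coe_zero, Pi.zero_apply]
      omega
    · show M₂.w * (LMd g₂).w * D = M₁.w * (LMd g₁).w * B
      simp only [hM₁def, hM₂def]
      exact (aux_wordamb_eq hamb).symm
  -- Bézout coefficients
  obtain ⟨c, d, hbez, hc0⟩ := aux_exists_bezout (aux_LC_ne_zero hg₁) (aux_LC_ne_zero hg₂)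
  have hgcd0 : gcd (LC g₁) (LC g₂) ≠ 0 :=
    fun h0 => aux_LC_ne_zero hg₁ ((gcd_eq_zero_iff _ _).1 h0).1
  -- leading data of the G-polynomial
  have hinjP₁ := aux_mmon_mul_injective (k := k) (n := n) M₁ ⟨0, B⟩
  have hinjP₂ := aux_mmon_mul_injective (k := k) (n := n) M₂ ⟨0, D⟩
  have hmonoP₁ : Monotone fun x : MMon k n => M₁ * x * (⟨0, B⟩ : MMon k n) :=
    fun x y h => hord.mon_mul _ _ _ _ h
  have hmonoP₂ : Monotone fun x : MMon k n => M₂ * x * (⟨0, D⟩ : MMon k n) :=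
    fun x y h => hord.mon_mul _ _ _ _ h
  have hcoefΛ : (GPolP c d g₁ g₂ M₁ B M₂ D).coeff Λ = gcd (LC g₁) (LC g₂) := by
    rw [GPolP, MonoidAlgebra.coeff_add, Finsupp.add_apply, aux_trm_mul_mul, aux_trm_mul_mul]
    have e1 : (Finsupp.mapDomain (fun x => M₁ * x * (⟨0, B⟩ : MMon k n)) (c • g₁.coeff)) Λ
        = c * LC g₁ := by
      have h := Finsupp.mapDomain_apply hinjP₁ (c • g₁.coeff) (LMd g₁)
      rw [hΛdef]
      simpa [LC] using h
    have e2 : (Finsupp.mapDomain (fun x => M₂ * x * (⟨0, D⟩ : MMon k n)) (d • g₂.coeff)) Λ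
        = d * LC g₂ := by
      have h := Finsupp.mapDomain_apply hinjP₂ (d • g₂.coeff) (LMd g₂)
      rw [← hΛ₂]
      simpa [LC] using h
    rw [e1, e2]
    exact hbez
  have hbound : ∀ τ ∈ (GPolP c d g₁ g₂ M₁ B M₂ D).coeff.support, τ ≤ Λ := by
    intro τ hτ
    rw [GPolP, MonoidAlgebra.coeff_add] at hτ
    rcases Finset.mem_union.1 (Finsupp.support_add hτ) with h1 | h2
    · rw [aux_trm_mul_mul] at h1
      obtain ⟨x, hx, rfl⟩ := Finset.mem_image.1 (Finsupp.mapDomain_support h1)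
      have hx' : x ∈ g₁.coeff.support := Finsupp.support_smul hx
      have hxle : x ≤ LMd g₁ := aux_le_max (aux_LMb_coe hg₁) hx'
      exact hmonoP₁ hxle
    · rw [aux_trm_mul_mul] at h2
      obtain ⟨x, hx, rfl⟩ := Finset.mem_image.1 (Finsupp.mapDomain_support h2)
      have hx' : x ∈ g₂.coeff.support := Finsupp.support_smul hx
      have hxle : x ≤ LMd g₂ := aux_le_max (aux_LMb_coe hg₂) hx'
      exact le_of_le_of_eq (hmonoP₂ hxle) hΛ₂
  have hGPmax : (GPolP c d g₁ g₂ M₁ B M₂ D).coeff.support.max = ↑Λ := by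
    apply aux_max_eq_of _ hbound
    rw [hcoefΛ]
    exact hgcd0
  have hGPne : GPolP c d g₁ g₂ M₁ B M₂ D ≠ 0 :=
    fun h => aux_ne_zero_of_max_coe hGPmax (by rw [h]; rfl)
  have hGPLMd : LMd (GPolP c d g₁ g₂ M₁ B M₂ D) = Λ := aux_LMd_of_max hGPmax
  have hGPLC : LC (GPolP c d g₁ g₂ M₁ B M₂ D) = gcd (LC g₁) (LC g₂) := by
    rw [LC, hGPLMd]
    exact hcoefΛ
  -- the coefficient c₃
  have hdvd : gcd (LC g₁) (LC g₂) ∣ LC f := by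
    rw [hCf]
    exact dvd_add (Dvd.dvd.mul_left (gcd_dvd_left _ _) c₁)
      (Dvd.dvd.mul_left (gcd_dvd_right _ _) c₂)
  obtain ⟨c₃, hc₃⟩ := hdvd
  have hc₃0 : c₃ ≠ 0 := fun h => hLCf (by rw [hc₃, h, mul_zero])
  -- leading term of t₃ g₃ b₃
  obtain ⟨hmax₃, hLMd₃, hLC₃⟩ := aux_prod_leading hord hGPne m₃ hc₃0 b₃w
  have hLT : LTerm (trm m₃ c₃ * GPolP c d g₁ g₂ M₁ B M₂ D * wrd b₃w) = LTerm f := by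
    rw [LTerm, hLMd₃, hLC₃, hGPLMd, hGPLC]
    rw [show m₃ * Λ * (⟨0, b₃w⟩ : MMon k n) = LMd f from (hφcomp₁ (LMd g₁)).trans hWf.1.symm]
    rw [show c₃ * gcd (LC g₁) (LC g₂) = LC f by rw [hc₃]; ring]
    rfl
  -- signatures
  have h0bot : sigb (0 : SigModule R k n r) = ⊥ := by
    show (0 : SigModule R k n r).support.max = ⊥
    simp
  have hβ₁ne : β₁ ≠ 0 := by
    intro h0
    rw [h0, aux_scaleLR_zero', h0bot] at hsig
    exact not_lt_bot hsig
  have hsig' : (sigb β₂).map (fun σ => mulLR m₂ σ b₂)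
      < (sigb β₁).map (fun σ => mulLR m₁ σ b₁) := by
    rw [← aux_sigb_scaleLR hord m₂ hc₂ β₂ b₂, ← aux_sigb_scaleLR hord m₁ hc₁ β₁ b₁]
    exact hsig
  have hM3mono : Monotone fun σ : ModMon k n r => mulLR m₃ σ b₃w :=
    fun σ τ h => hord.mod_mul _ _ _ _ h
  have hMlt : (sigb β₂).map (fun σ => mulLR M₂ σ D)
      < (sigb β₁).map (fun σ => mulLR M₁ σ B) := by
    apply aux_withbot_lt_reflect hM3mono
    rw [aux_withbot_map_map, aux_withbot_map_map]
    simp only [hcompose₁, hcompose₂]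
    exact hsig'
  have hsGP₁ : sigb (scaleLR M₁ c β₁ B) = (sigb β₁).map (fun σ => mulLR M₁ σ B) :=
    aux_sigb_scaleLR hord M₁ hc0 β₁ B
  have hsGP₂ : sigb (scaleLR M₂ d β₂ D) ≤ (sigb β₂).map (fun σ => mulLR M₂ σ D) := by
    by_cases hd0 : d = 0
    · rw [hd0, aux_scaleLR_zero, h0bot]
      exact bot_le
    · rw [aux_sigb_scaleLR hord M₂ hd0 β₂ D]
  have hGPMlt : sigb (scaleLR M₂ d β₂ D) < sigb (scaleLR M₁ c β₁ B) := by
    rw [hsGP₁]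
    exact lt_of_le_of_lt hsGP₂ hMlt
  have hGPMsig : sigb (GPolM c d β₁ β₂ M₁ B M₂ D)
      = (sigb β₁).map (fun σ => mulLR M₁ σ B) := by
    rw [← hsGP₁]
    exact aux_max_add_eq hGPMlt
  -- ambiguity signature
  have hlcm0 : lcm (LC g₁) (LC g₂) ≠ 0 := by
    intro hh
    rcases (lcm_eq_zero_iff _ _).1 hh with h | h
    · exact aux_LC_ne_zero hg₁ h
    · exact aux_LC_ne_zero hg₂ h
  have hcofL0 : cofL g₁ g₂ ≠ 0 := by
    intro h0
    have hspec := Classical.choose_spec (dvd_lcm_left (LC g₁) (LC g₂))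
    rw [cofL] at h0
    rw [h0, mul_zero] at hspec
    exact hlcm0 hspec
  have hcofR0 : cofR g₁ g₂ ≠ 0 := by
    intro h0
    have hspec := Classical.choose_spec (dvd_lcm_right (LC g₁) (LC g₂))
    rw [cofR] at h0
    rw [h0, mul_zero] at hspec
    exact hlcm0 hspec
  have hcond : sigb (scaleLR M₂ (cofR g₁ g₂) β₂ D) ≤ sigb (scaleLR M₁ (cofL g₁ g₂) β₁ B) := by
    rw [aux_sigb_scaleLR hord M₂ hcofR0 β₂ D, aux_sigb_scaleLR hord M₁ hcofL0 β₁ B]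
    exact le_of_lt hMlt
  have hambSIG : sigb (ambSIG g₁ g₂ β₁ β₂ M₁ B M₂ D)
      = (sigb β₁).map (fun σ => mulLR M₁ σ B) := by
    rw [ambSIG, if_pos hcond, aux_sigb_sigT, aux_sigb_scaleLR hord M₁ hcofL0 β₁ B]
  -- final signature computation
  have hfuncomp₁ : (fun σ : ModMon k n r => mulLR m₃ σ b₃w) ∘ (fun σ => mulLR M₁ σ B)
      = fun σ => mulLR m₁ σ b₁ := funext hcompose₁
  have hfuncomp₂ : (fun σ : ModMon k n r => mulLR m₃ σ b₃w) ∘ (fun σ => mulLR M₂ σ D)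
      = fun σ => mulLR m₂ σ b₂ := funext hcompose₂
  have hscale_eq : scaleLR m₃ c₃ (GPolM c d β₁ β₂ M₁ B M₂ D) b₃w
      = scaleLR m₁ (c₃ * c) β₁ b₁ + scaleLR m₂ (c₃ * d) β₂ b₂ := by
    rw [GPolM, aux_scaleLR_eq m₃, aux_scaleLR_eq M₁, aux_scaleLR_eq M₂,
      aux_scaleLR_eq m₁, aux_scaleLR_eq m₂]
    rw [smul_add, Finsupp.mapDomain_add, ← Finsupp.mapDomain_smul, ← Finsupp.mapDomain_smul,
      ← Finsupp.mapDomain_comp, ← Finsupp.mapDomain_comp, smul_smul, smul_smul,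
      hfuncomp₁, hfuncomp₂]
  have hfinlt : sigb (scaleLR m₂ (c₃ * d) β₂ b₂) < sigb (scaleLR m₁ (c₃ * c) β₁ b₁) := by
    have hr : sigb (scaleLR m₁ (c₃ * c) β₁ b₁) = (sigb β₁).map (fun σ => mulLR m₁ σ b₁) :=
      aux_sigb_scaleLR hord m₁ (mul_ne_zero hc₃0 hc0) β₁ b₁
    by_cases hd0 : c₃ * d = 0
    · rw [hd0, aux_scaleLR_zero, h0bot, hr, aux_sigb_coe hβ₁ne, WithBot.map_coe]
      exact WithBot.bot_lt_coe _
    · rw [aux_sigb_scaleLR hord m₂ hd0 β₂ b₂, hr,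
        ← aux_sigb_scaleLR hord m₂ hc₂ β₂ b₂, ← aux_sigb_scaleLR hord m₁ hc₁ β₁ b₁]
      exact hsig
  have hfinal : sigb (scaleLR m₃ c₃ (GPolM c d β₁ β₂ M₁ B M₂ D) b₃w)
      = sigb (scaleLR m₁ c₁ β₁ b₁) := by
    rw [hscale_eq]
    have h := aux_max_add_eq hfinlt
    rw [show sigb (scaleLR m₁ (c₃ * c) β₁ b₁ + scaleLR m₂ (c₃ * d) β₂ b₂)
        = sigb (scaleLR m₁ (c₃ * c) β₁ b₁) from h]
    rw [aux_sigb_scaleLR hord m₁ (mul_ne_zero hc₃0 hc0) β₁ b₁,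
      ← aux_sigb_scaleLR hord m₁ hc₁ β₁ b₁]
  exact ⟨M₁, B, M₂, D, ⟨A, B, C, D, hamb, rfl, rfl, rfl, rfl⟩, c, d, hbez,
    hGPMsig.trans hambSIG.symm, m₃, c₃, b₃w, hc₃0, hLT, hfinal⟩
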